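/- For every integer l > 1, every sign ε ∈ {+1,−1}, and every linear functional φ ∈ M₄(l)* satisfying φ∘i = ε·φ, the element PD(φ) lies in the (−ε)-eigenspace of the involution i, i.e. i(PD(φ)) = −ε·PD(φ). -/

import Mathlib

open scoped BigOperators

namespace MW

variable (l : ℕ)

/-- Index type for the basis symbols: `0 ↦ x²`, `1 ↦ xy`, `2 ↦ y²`. -/
abbrev Sym := Fin 3 × ZMod l × ZMod l

/-- The free ℂ-vector space on the symbols. -/
abbrev V := Sym l →₀ ℂ

/-- `gcd(u,v,l) = 1`. -/
def copr (u v : ZMod l) : Prop := Nat.gcd (Nat.gcd (ZMod.val u) (ZMod.val v)) l = 1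

instance (u v : ZMod l) : Decidable (copr l u v) := by unfold copr; infer_instance

noncomputable def X2 (u v : ZMod l) : V l := Finsupp.single (0, u, v) 1
noncomputable def XY (u v : ZMod l) : V l := Finsupp.single (1, u, v) 1
noncomputable def Y2 (u v : ZMod l) : V l := Finsupp.single (2, u, v) 1

/-- The relation subspace: the relations of Merel–Shokurov on coprime symbols,
together with the (dummy) basis vectors at non-coprime indices. -/
noncomputable def Rel : Submodule ℂ (V l) :=
  Submodule.span ℂ
    ({ w | ∃ u v, ¬ copr l u v ∧ (w = X2 l u v ∨ w = XY l u v ∨ w = Y2 l u v) } ∪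
     { w | ∃ u v, copr l u v ∧
        (w = X2 l u v + Y2 l v (-u) ∨
         w = XY l u v - XY l v (-u) ∨
         w = Y2 l u v + X2 l v (-u) ∨
         w = XY l v (-u - v) - XY l (-u - v) u + Y2 l (-u - v) u + X2 l u v - XY l u v) })

/-- The space of weight four modular symbols of level `l`. -/
abbrev M := V l ⧸ Rel l

noncomputable def x2 (u v : ZMod l) : M l := Submodule.Quotient.mk (X2 l u v)
noncomputable def xy (u v : ZMod l) : M l := Submodule.Quotient.mk (XY l u v)
noncomputable def y2 (u v : ZMod l) : M l := Submodule.Quotient.mk (Y2 l u v)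

/-- The class of `p₂·x²(u,v) + p₁·xy(u,v) + p₀·y²(u,v)` in `M l`. -/
noncomputable def pcl (p2 p1 p0 : ℂ) (u v : ZMod l) : M l :=
  p2 • x2 l u v + p1 • xy l u v + p0 • y2 l u v

/-- The linear map on `V l` underlying the involution `i`:
`x²(u,v) ↦ x²(-u,v)`, `xy(u,v) ↦ -xy(-u,v)`, `y²(u,v) ↦ y²(-u,v)`. -/
noncomputable def iV : V l →ₗ[ℂ] V l :=
  Finsupp.lift (V l) ℂ (Sym l) fun p =>
    if p.1 = 1 then -(Finsupp.single (1, -p.2.1, p.2.2) (1 : ℂ))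
    else Finsupp.single (p.1, -p.2.1, p.2.2) (1 : ℂ)

/-- The Poincaré duality map (as a function on the dual space). -/
noncomputable def PD [NeZero l] (φ : Module.Dual ℂ (M l)) : M l :=
  (24 : ℂ)⁻¹ • ∑ u : ZMod l, ∑ v : ZMod l,
    ( φ (pcl l 1 (-2) 1 (-v) (u + v) - pcl l 1 2 1 v (v - u)) • x2 l u v
      - (2 : ℂ) • φ (pcl l 0 (-1) 1 (-v) (u + v) + pcl l 0 1 1 v (v - u)) • xy l u v
      + φ (pcl l 0 0 1 (-v) (u + v) - pcl l 0 0 1 v (v - u)) • y2 l u v )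

end MW


section Aux
open MW
variable (l : ℕ) [NeZero l]

lemma iV_X2 (u v : ZMod l) : iV l (X2 l u v) = X2 l (-u) v := by
  simp [iV, X2, Finsupp.lift_apply, Finsupp.sum_single_index]

lemma iV_XY (u v : ZMod l) : iV l (XY l u v) = -(XY l (-u) v) := by
  simp [iV, XY, Finsupp.lift_apply, Finsupp.sum_single_index]

lemma iV_Y2 (u v : ZMod l) : iV l (Y2 l u v) = Y2 l (-u) v := by
  simp [iV, Y2, Finsupp.lift_apply, Finsupp.sum_single_index]

variable (hi : Rel l ≤ (Rel l).comap (iV l))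

lemma I_x2 (u v : ZMod l) :
    Submodule.mapQ (Rel l) (Rel l) (iV l) hi (x2 l u v) = x2 l (-u) v := by
  simp [x2, Submodule.mapQ_apply, iV_X2]

lemma I_xy (u v : ZMod l) :
    Submodule.mapQ (Rel l) (Rel l) (iV l) hi (xy l u v) = -(xy l (-u) v) := by
  simp only [xy, Submodule.mapQ_apply, iV_XY, Submodule.Quotient.mk_neg]

lemma I_y2 (u v : ZMod l) :
    Submodule.mapQ (Rel l) (Rel l) (iV l) hi (y2 l u v) = y2 l (-u) v := by
  simp [y2, Submodule.mapQ_apply, iV_Y2]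

lemma I_pcl (p2 p1 p0 : ℂ) (u v : ZMod l) :
    Submodule.mapQ (Rel l) (Rel l) (iV l) hi (pcl l p2 p1 p0 u v)
      = pcl l p2 (-p1) p0 (-u) v := by
  simp only [pcl, map_add, map_smul, I_x2, I_xy, I_y2, smul_neg, neg_smul]

end Aux

open MW in
theorem stmt9 (l : ℕ) (hl : 1 < l) [NeZero l]
    (hi : Rel l ≤ (Rel l).comap (iV l)) (ε : ℂ) (hε : ε = 1 ∨ ε = -1)
    (φ : Module.Dual ℂ (M l))
    (hφ : φ.comp (Submodule.mapQ (Rel l) (Rel l) (iV l) hi) = ε • φ) :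
    Submodule.mapQ (Rel l) (Rel l) (iV l) hi (PD l φ) = (-ε) • PD l φ := by
  set I := Submodule.mapQ (Rel l) (Rel l) (iV l) hi with hI
  have key : ∀ p2 p1 p0 (u v : ZMod l),
      φ (pcl l p2 (-p1) p0 (-u) v) = ε * φ (pcl l p2 p1 p0 u v) := by
    intro p2 p1 p0 u v
    have h := LinearMap.congr_fun hφ (pcl l p2 p1 p0 u v)
    simpa [hI, I_pcl, smul_eq_mul] using h
  set F : ZMod l → ZMod l → M l := fun u v =>
    ( φ (pcl l 1 (-2) 1 (-v) (u + v) - pcl l 1 2 1 v (v - u)) • x2 l u v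
      - (2 : ℂ) • φ (pcl l 0 (-1) 1 (-v) (u + v) + pcl l 0 1 1 v (v - u)) • xy l u v
      + φ (pcl l 0 0 1 (-v) (u + v) - pcl l 0 0 1 v (v - u)) • y2 l u v ) with hF
  have hPD : PD l φ = (24 : ℂ)⁻¹ • ∑ u : ZMod l, ∑ v : ZMod l, F u v := rfl
  have hterm : ∀ u v : ZMod l, I (F (-u) v) = (-ε) • F u v := by
    intro u v
    have a1 := key 1 (-2) 1 (-v) (u + v)
    have a2 := key 1 2 1 v (v - u)
    have b1 := key 0 (-1) 1 (-v) (u + v)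
    have b2 := key 0 1 1 v (v - u)
    have c1 := key 0 0 1 (-v) (u + v)
    have c2 := key 0 0 1 v (v - u)
    simp only [neg_neg, neg_zero] at a1 a2 b1 b2 c1 c2
    rw [hF]
    simp only [hI, map_add, map_sub, map_smul, I_x2 l hi, I_xy l hi, I_y2 l hi, neg_neg]
    rw [show (-u + v : ZMod l) = v - u by ring, show (v - -u : ZMod l) = u + v by ring]
    match_scalars
    · linear_combination a2 - a1
    · linear_combination 2 * b1 + 2 * b2
    · linear_combination c2 - c1
  rw [hPD, map_smul, map_sum]
  simp only [map_sum]
  rw [smul_comm]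
  congr 1
  have hre := Equiv.sum_comp (Equiv.neg (ZMod l)) (fun u => ∑ v : ZMod l, I (F u v))
  rw [← hre]
  rw [Finset.smul_sum]
  refine Finset.sum_congr rfl fun u _ => ?_
  rw [Finset.smul_sum]
  refine Finset.sum_congr rfl fun v _ => ?_
  exact hterm u v
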